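/- The sign of |Ω_{d+1}| - |Ω_d| equals the sign of the linear expression -(n+2)d + k(n-k) - 1; in particular |Ω_{d+1}| > |Ω_d| if and only if d < (k(n-k)-1)/(n+2), and |Ω_{d+1}| < |Ω_d| if and only if d > (k(n-k)-1)/(n+2). -/
import Mathlib


theorem shell_sign (n k d : ℕ) (hk1 : 1 ≤ k) (hk2 : k ≤ n - 1)
    (hd : d < min k (n - k)) :
    (Nat.choose k d * Nat.choose (n - k) d
        < Nat.choose k (d + 1) * Nat.choose (n - k) (d + 1)
      ↔ (d : ℚ) < ((k : ℚ) * ((n : ℚ) - k) - 1) / ((n : ℚ) + 2))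
    ∧ (Nat.choose k (d + 1) * Nat.choose (n - k) (d + 1)
        < Nat.choose k d * Nat.choose (n - k) d
      ↔ ((k : ℚ) * ((n : ℚ) - k) - 1) / ((n : ℚ) + 2) < (d : ℚ)) := by
  have hdk : d < k := lt_of_lt_of_le hd (min_le_left _ _)
  have hdnk : d < n - k := lt_of_lt_of_le hd (min_le_right _ _)
  have hkn : k < n := by omega
  set A := Nat.choose k d * Nat.choose (n - k) d with hA
  set B := Nat.choose k (d + 1) * Nat.choose (n - k) (d + 1) with hB
  have hApos : 0 < A := Nat.mul_pos (Nat.choose_pos hdk.le) (Nat.choose_pos hdnk.le)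
  have key : B * ((d + 1) * (d + 1)) = A * ((k - d) * (n - k - d)) := by
    have h1 := Nat.choose_succ_right_eq k d
    have h2 := Nat.choose_succ_right_eq (n - k) d
    calc B * ((d + 1) * (d + 1))
        = (Nat.choose k (d + 1) * (d + 1)) * (Nat.choose (n - k) (d + 1) * (d + 1)) := by
          rw [hB]; ring
      _ = (Nat.choose k d * (k - d)) * (Nat.choose (n - k) d * (n - k - d)) := by
          rw [h1, h2]
      _ = A * ((k - d) * (n - k - d)) := by rw [hA]; ring
  have ppos : 0 < (d + 1) * (d + 1) := by positivity
  have hnat1 : A < B ↔ (d + 1) * (d + 1) < (k - d) * (n - k - d) := by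
    constructor
    · intro h
      have h' : A * ((d + 1) * (d + 1)) < A * ((k - d) * (n - k - d)) := by
        rw [← key]; exact Nat.mul_lt_mul_of_pos_right h ppos
      exact Nat.lt_of_mul_lt_mul_left h'
    · intro h
      have h' : A * ((d + 1) * (d + 1)) < B * ((d + 1) * (d + 1)) := by
        rw [key]; exact Nat.mul_lt_mul_of_pos_left h hApos
      exact Nat.lt_of_mul_lt_mul_right h'
  have hnat2 : B < A ↔ (k - d) * (n - k - d) < (d + 1) * (d + 1) := by
    constructor
    · intro h
      have h' : A * ((k - d) * (n - k - d)) < A * ((d + 1) * (d + 1)) := by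
        rw [← key]; exact Nat.mul_lt_mul_of_pos_right h ppos
      exact Nat.lt_of_mul_lt_mul_left h'
    · intro h
      have h' : B * ((d + 1) * (d + 1)) < A * ((d + 1) * (d + 1)) := by
        rw [key]; exact Nat.mul_lt_mul_of_pos_left h hApos
      exact Nat.lt_of_mul_lt_mul_right h'
  have hn2 : (0 : ℚ) < (n : ℚ) + 2 := by positivity
  have hc1 : ((k - d : ℕ) : ℚ) = (k : ℚ) - d := by
    push_cast [Nat.cast_sub hdk.le]; ring
  have hc2 : ((n - k - d : ℕ) : ℚ) = (n : ℚ) - k - d := by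
    push_cast [Nat.cast_sub hdnk.le, Nat.cast_sub hkn.le]; ring
  constructor
  · rw [hnat1, lt_div_iff₀ hn2]
    rw [show ((d + 1) * (d + 1) < (k - d) * (n - k - d)) ↔
        (((d + 1) * (d + 1) : ℕ) : ℚ) < (((k - d) * (n - k - d) : ℕ) : ℚ) from
      (Nat.cast_lt).symm]
    push_cast [hc1, hc2]
    constructor <;> intro h <;> nlinarith
  · rw [hnat2, div_lt_iff₀ hn2]
    rw [show ((k - d) * (n - k - d) < (d + 1) * (d + 1)) ↔
        (((k - d) * (n - k - d) : ℕ) : ℚ) < (((d + 1) * (d + 1) : ℕ) : ℚ) from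
      (Nat.cast_lt).symm]
    push_cast [hc1, hc2]
    constructor <;> intro h <;> nlinarith
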